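/- Let T be a nonempty finite set, let X_i and Y_i be elements of a commutative ring for each i in T, and let c ∈ {1, -1}. Then the sum over all tuples (ε_i) ∈ {±1}^T with ∏_{i∈T} ε_i = c of the products ∏_{i∈T}(X_i + ε_i Y_i) equals 2^(#T - 1) · (∏_{i∈T} X_i + c · ∏_{i∈T} Y_i). -/
import Mathlib
open Finset

section Aux
variable {ι : Type*} [Fintype ι] [DecidableEq ι]

private lemma flip2_prod (i0 j0 : ι) (hne : i0 ≠ j0) (ε : ι → ℤˣ) (s : Finset ι) :
    ∏ i ∈ s, (((if i = i0 then (-1 : ℤˣ) else 1) * (if i = j0 then (-1 : ℤˣ) else 1) * ε i : ℤˣ) : ℤ)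
      = (if i0 ∈ s then (-1 : ℤ) else 1) * (if j0 ∈ s then (-1 : ℤ) else 1)
        * ∏ i ∈ s, (ε i : ℤ) := by
  have h : ∀ i, (((if i = i0 then (-1 : ℤˣ) else 1) * (if i = j0 then (-1 : ℤˣ) else 1) * ε i : ℤˣ) : ℤ)
      = (if i = i0 then (-1 : ℤ) else 1) * (if i = j0 then (-1 : ℤ) else 1) * (ε i : ℤ) := by
    intro i; push_cast [apply_ite (fun u : ℤˣ => (u : ℤ))]; ring
  rw [Finset.prod_congr rfl (fun i _ => h i), Finset.prod_mul_distrib,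
    Finset.prod_mul_distrib, Finset.prod_ite_eq' s i0 (fun _ => (-1 : ℤ)),
    Finset.prod_ite_eq' s j0 (fun _ => (-1 : ℤ))]

private lemma inner_zero (c : ℤ) (S : Finset ι) (hS : S.Nonempty) (hS2 : S ≠ univ) :
    ∑ ε ∈ univ.filter (fun ε : ι → ℤˣ => ∏ i, (ε i : ℤ) = c),
      ∏ i ∈ univ \ S, (ε i : ℤ) = 0 := by
  obtain ⟨j0, hj0⟩ := hS
  have : (univ \ S).Nonempty := by
    rw [sdiff_nonempty]; exact fun h => hS2 (univ_subset_iff.mp h)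
  obtain ⟨i0, hi0⟩ := this
  have hne : i0 ≠ j0 := fun h => (mem_sdiff.mp hi0).2 (h ▸ hj0)
  refine Finset.sum_involution
    (fun ε _ => fun i => (if i = i0 then (-1 : ℤˣ) else 1) * (if i = j0 then (-1 : ℤˣ) else 1) * ε i)
    ?_ ?_ ?_ ?_
  · intro ε hε
    rw [flip2_prod i0 j0 hne, if_pos hi0,
      if_neg (fun h : j0 ∈ univ \ S => (mem_sdiff.mp h).2 hj0)]
    ring
  · intro ε _ _ h
    have := congrFun h i0
    simp only [if_pos rfl, if_neg hne] at this
    have h2 : -(ε i0) = ε i0 := by simpa using this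
    rcases Int.units_eq_one_or (ε i0) with h3 | h3 <;> rw [h3] at h2 <;> exact absurd h2 (by decide)
  · intro ε hε
    simp only [mem_filter, mem_univ, true_and] at hε ⊢
    rw [flip2_prod i0 j0 hne, if_pos (mem_univ i0), if_pos (mem_univ j0), hε]
    ring
  · intro ε _
    funext i
    rcases eq_or_ne i i0 with rfl | h1
    · simp [hne]
    · rcases eq_or_ne i j0 with rfl | h2
      · simp [Ne.symm hne]
      · simp [h1, h2]

private lemma card_filter_sign [Nonempty ι] (c : ℤ) (hc : c = 1 ∨ c = -1) :
    (univ.filter fun ε : ι → ℤˣ => ∏ i, (ε i : ℤ) = c).card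
      = 2 ^ (Fintype.card ι - 1) := by
  obtain ⟨i0⟩ := ‹Nonempty ι›
  let A := univ.filter fun ε : ι → ℤˣ => ∏ i, (ε i : ℤ) = 1
  let B := univ.filter fun ε : ι → ℤˣ => ∏ i, (ε i : ℤ) = -1
  have flip_prod : ∀ ε : ι → ℤˣ,
      ∏ i, ((Function.update ε i0 (-(ε i0))) i : ℤ) = - ∏ i, (ε i : ℤ) := by
    intro ε
    have h : ∀ j, ((Function.update ε i0 (-(ε i0))) j : ℤ)
        = Function.update (fun k => ((ε k : ℤ))) i0 (-(ε i0 : ℤ)) j := by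
      intro j
      simpa using Function.apply_update (fun k (u : ℤˣ) => (u : ℤ)) ε i0 (-(ε i0)) j
    rw [Finset.prod_congr rfl (fun j _ => h j),
      Finset.prod_update_of_mem (mem_univ i0), ← Finset.mul_prod_erase univ _ (mem_univ i0),
      sdiff_singleton_eq_erase]
    ring
  have hcard : A.card = B.card := by
    refine Finset.card_bij' (fun ε _ => Function.update ε i0 (-(ε i0)))
      (fun ε _ => Function.update ε i0 (-(ε i0))) ?_ ?_ ?_ ?_
    · intro ε hε
      simp only [A, B, mem_filter, mem_univ, true_and] at hε ⊢
      rw [flip_prod, hε]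
    · intro ε hε
      simp only [A, B, mem_filter, mem_univ, true_and] at hε ⊢
      rw [flip_prod, hε]; ring
    · intro ε _; simp [Function.update_idem]
    · intro ε _; simp [Function.update_idem]
  have hunion : A ∪ B = univ := by
    ext ε
    simp only [A, B, mem_union, mem_filter, mem_univ, true_and, iff_true]
    have h : ∏ i, (ε i : ℤ) = ((∏ i, ε i : ℤˣ) : ℤ) := by push_cast; rfl
    rcases Int.units_eq_one_or (∏ i, ε i) with h1 | h1 <;> [left; right] <;>
      rw [h, h1] <;> rfl
  have hdisj : Disjoint A B := by
    rw [Finset.disjoint_filter]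
    intro ε _ h1 h2
    rw [h1] at h2; norm_num at h2
  have htot : A.card + B.card = 2 ^ Fintype.card ι := by
    rw [← Finset.card_union_of_disjoint hdisj, hunion, Finset.card_univ,
      Fintype.card_fun, Fintype.card_units_int]
  have hn : Fintype.card ι = Fintype.card ι - 1 + 1 :=
    (Nat.succ_pred_eq_of_pos Fintype.card_pos).symm
  have hpow : (2 : ℕ) ^ Fintype.card ι = 2 ^ (Fintype.card ι - 1) * 2 := by
    rw [← pow_succ, ← hn]
  have hA2 : A.card = 2 ^ (Fintype.card ι - 1) := by omega
  rcases hc with rfl | rfl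
  · exact hA2
  · exact hcard ▸ hA2

end Aux

/-- Lemma 4.17 of Hanke–Ho (as used in the paper): for a nonempty finite index set,
the sum over sign vectors with prescribed product of the products `∏ (Xᵢ + εᵢ Yᵢ)`
equals `2^(#T - 1) (∏ Xᵢ + c ∏ Yᵢ)`. -/
theorem sum_over_signs_with_fixed_product {R : Type*} [CommRing R]
    {ι : Type*} [Fintype ι] [Nonempty ι] [DecidableEq ι]
    (X Y : ι → R) (c : ℤ) (hc : c = 1 ∨ c = -1) :
    ∑ ε ∈ Finset.univ.filter (fun ε : ι → ℤˣ => ∏ i, (ε i : ℤ) = c),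
        ∏ i, (X i + ((ε i : ℤ) : R) * Y i)
      = 2 ^ (Fintype.card ι - 1) * (∏ i, X i + (c : R) * ∏ i, Y i) := by
  classical
  set F := Finset.univ.filter (fun ε : ι → ℤˣ => ∏ i, (ε i : ℤ) = c) with hF
  set n := Fintype.card ι with hn
  have step1 : ∑ ε ∈ F, ∏ i, (X i + ((ε i : ℤ) : R) * Y i)
      = ∑ t ∈ (univ : Finset ι).powerset,
          (∏ i ∈ t, X i) * (∏ i ∈ univ \ t, Y i)
            * ((∑ ε ∈ F, ∏ i ∈ univ \ t, (ε i : ℤ) : ℤ) : R) := by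
    rw [Finset.sum_congr rfl
      (fun ε _ => Finset.prod_add (fun i => X i) (fun i => ((ε i : ℤ) : R) * Y i) univ),
      Finset.sum_comm]
    refine Finset.sum_congr rfl fun t _ => ?_
    rw [Int.cast_sum, Finset.mul_sum]
    refine Finset.sum_congr rfl fun ε _ => ?_
    rw [Finset.prod_mul_distrib]
    push_cast
    ring
  rw [step1]
  have hzero : ∀ t ∈ (univ : Finset ι).powerset, t ∉ ({∅, univ} : Finset (Finset ι)) →
      (∏ i ∈ t, X i) * (∏ i ∈ univ \ t, Y i)
        * ((∑ ε ∈ F, ∏ i ∈ univ \ t, (ε i : ℤ) : ℤ) : R) = 0 := by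
    intro t _ ht
    simp only [mem_insert, mem_singleton, not_or] at ht
    rw [hF, inner_zero c t (Finset.nonempty_iff_ne_empty.mpr ht.1) ht.2]
    simp
  rw [← Finset.sum_subset (by
      intro t ht
      simp only [mem_insert, mem_singleton] at ht
      rcases ht with rfl | rfl <;> simp) hzero]
  have hne : (∅ : Finset ι) ≠ univ := by
    simpa using (Finset.univ_nonempty (α := ι)).ne_empty.symm
  rw [Finset.sum_pair hne]
  have hFcard : (F.card : ℤ) = 2 ^ (n - 1) := by
    rw [hF, hn, card_filter_sign c hc]
    push_cast
    ring
  have hIuniv : (∑ ε ∈ F, ∏ i ∈ univ \ univ, (ε i : ℤ) : ℤ) = 2 ^ (n - 1) := by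
    rw [Finset.sdiff_self]
    simp only [bot_eq_empty, Finset.prod_empty, Finset.sum_const, nsmul_eq_mul, mul_one]
    exact hFcard
  have hIempty : (∑ ε ∈ F, ∏ i ∈ univ \ (∅ : Finset ι), (ε i : ℤ) : ℤ) = c * 2 ^ (n - 1) := by
    rw [Finset.sdiff_empty]
    calc ∑ ε ∈ F, ∏ i, (ε i : ℤ) = ∑ _ε ∈ F, c :=
          Finset.sum_congr rfl (fun ε hε => by
            rw [hF] at hε
            exact (Finset.mem_filter.mp hε).2)
      _ = (F.card : ℤ) * c := by rw [Finset.sum_const, nsmul_eq_mul]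
      _ = c * 2 ^ (n - 1) := by rw [hFcard]; ring
  rw [hIuniv, hIempty]
  simp only [Finset.prod_empty, sdiff_empty, sdiff_self, bot_eq_empty, one_mul, mul_one]
  push_cast
  ring
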